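/- For a metric space (X,d) with finite diameter and the Young function ψ₂(t) = e^{t²} − 1, if X = B_{ℓ₂ⁿ} (unit ball of ℂⁿ with Euclidean norm) equipped with the metric d(z,z') = ‖z−z'‖_∞, then the entropy integral J_{ψ₂}(X,d) = ∫₀^{diam X} ψ₂^{−1}(N(X,d;ε)) dε satisfies J_{ψ₂}(B_{ℓ₂ⁿ}, ‖·‖_∞) ≤ C log^{3/2}(n) for some constant C > 0 independent of n ≥ 2. -/

import Mathlib

open MeasureTheory

/-- The unit ball of `ℓ₂ⁿ` over `ℂ`. -/
def l2Ball (n : ℕ) : Set (Fin n → ℂ) := {z | ∑ i, ‖z i‖ ^ 2 ≤ 1}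

/-- The `ℓ∞` distance on `ℂⁿ`. -/
noncomputable def dInfty {n : ℕ} (z z' : Fin n → ℂ) : ℝ := ⨆ i, ‖z i - z' i‖

/-- `N(B_{ℓ₂ⁿ}, ‖·‖_∞; ε)`: the smallest number of open `ℓ∞`-balls of radius `ε`
(centered in the ball) needed to cover the `ℓ₂` unit ball. -/
noncomputable def covNum (n : ℕ) (ε : ℝ) : ℕ :=
  sInf {m : ℕ | ∃ s : Finset (Fin n → ℂ), ↑s ⊆ l2Ball n ∧ s.card = m ∧
    ∀ z ∈ l2Ball n, ∃ w ∈ s, dInfty z w < ε}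

/-- The diameter of the `ℓ₂` unit ball in the `ℓ∞` metric. -/
noncomputable def diamInfty (n : ℕ) : ℝ :=
  sSup {r : ℝ | ∃ z ∈ l2Ball n, ∃ z' ∈ l2Ball n, r = dInfty z z'}

section EntropyAux
open Finset
variable {n : ℕ}

lemma norm_le_one_of_mem {z : Fin n → ℂ} (hz : z ∈ l2Ball n) (i : Fin n) :
    ‖z i‖ ≤ 1 := by
  have h1 : ‖z i‖ ^ 2 ≤ ∑ j, ‖z j‖ ^ 2 :=
    Finset.single_le_sum (f := fun j => ‖z j‖ ^ 2) (fun j _ => by positivity) (mem_univ i)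
  have h2 : ‖z i‖ ^ 2 ≤ 1 := h1.trans hz
  nlinarith [norm_nonneg (z i)]
lemma dInfty_le [Nonempty (Fin n)] {z z' : Fin n → ℂ} {c : ℝ}
    (h : ∀ i, ‖z i - z' i‖ ≤ c) : dInfty z z' ≤ c := ciSup_le h
lemma le_dInfty (z z' : Fin n → ℂ) (i : Fin n) : ‖z i - z' i‖ ≤ dInfty z z' :=
  le_ciSup (f := fun i => ‖z i - z' i‖) (Set.Finite.bddAbove (Set.finite_range _)) i
lemma zero_mem_l2Ball : (0 : Fin n → ℂ) ∈ l2Ball n := by simp [l2Ball]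

lemma covNum_le (hn : 1 ≤ n) {ε : ℝ} (hε : 0 < ε) :
    covNum n ε ≤ (n * (2 * ⌈5/ε⌉₊ + 1) ^ 2) ^ (min n ⌈7/ε^2⌉₊) := by
  classical
  haveI : Nonempty (Fin n) := Fin.pos_iff_nonempty.mp hn
  set δ : ℝ := ε / 5 with hδ
  have hδpos : 0 < δ := by positivity
  set M : ℕ := ⌈5/ε⌉₊ with hM
  have hMge : 5/ε ≤ (M:ℝ) := Nat.le_ceil _
  have h5 : 5 ≤ (M:ℝ) * ε := by rwa [div_le_iff₀ hε] at hMge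
  have hMδ : 1 ≤ (M:ℝ) * δ := by rw [hδ]; nlinarith
  set k : ℕ := min n ⌈7/ε^2⌉₊ with hk
  -- the grid
  set G : Finset ℂ := ((Finset.Icc (-(M:ℤ)) M) ×ˢ (Finset.Icc (-(M:ℤ)) M)).image
      (fun p => Complex.mk (p.1 * δ) (p.2 * δ)) with hG
  have hG0 : (0:ℂ) ∈ G := by
    refine Finset.mem_image.mpr ⟨(0,0), ?_, ?_⟩
    · simp [Finset.mem_product]
    · simp [Complex.ext_iff]
  have hGcard : G.card ≤ (2*M+1)^2 := by
    refine (Finset.card_image_le).trans ?_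
    rw [Finset.card_product, Int.card_Icc]
    have h : ((M:ℤ) + 1 - -(M:ℤ)).toNat = 2*M+1 := by omega
    rw [h]; ring_nf; omega
  -- rounding
  set r : ℂ → ℂ := fun c => Complex.mk (⌊c.re/δ⌋ * δ) (⌊c.im/δ⌋ * δ) with hr
  have hfloor_mem : ∀ x : ℝ, |x| ≤ 1 → ⌊x/δ⌋ ∈ Finset.Icc (-(M:ℤ)) M := by
    intro x hx
    obtain ⟨hxl, hxu⟩ := abs_le.mp hx
    rw [Finset.mem_Icc]
    constructor
    · apply Int.le_floor.mpr
      push_cast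
      rw [le_div_iff₀ hδpos]
      nlinarith
    · have h1 : x/δ ≤ (M:ℝ) := by rw [div_le_iff₀ hδpos]; nlinarith
      exact_mod_cast (Int.floor_le (x/δ)).trans h1
  have hfloor_err : ∀ x : ℝ, |x - ⌊x/δ⌋ * δ| ≤ δ := by
    intro x
    have h1 : ((⌊x/δ⌋:ℝ)) ≤ x/δ := Int.floor_le _
    have h2 : x/δ < (⌊x/δ⌋:ℝ) + 1 := Int.lt_floor_add_one _
    have hxx : x/δ*δ = x := div_mul_cancel₀ x hδpos.ne'
    rw [abs_le]
    constructor <;> nlinarith [mul_le_mul_of_nonneg_right h1 hδpos.le,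
      mul_le_mul_of_nonneg_right h2.le hδpos.le]
  have hr_mem : ∀ c : ℂ, ‖c‖ ≤ 1 → r c ∈ G := by
    intro c hc
    refine Finset.mem_image.mpr ⟨(⌊c.re/δ⌋, ⌊c.im/δ⌋), ?_, rfl⟩
    rw [Finset.mem_product]
    exact ⟨hfloor_mem _ ((Complex.abs_re_le_norm c).trans hc),
      hfloor_mem _ ((Complex.abs_im_le_norm c).trans hc)⟩
  have hr_err : ∀ c : ℂ, ‖c - r c‖ ≤ 2*δ := by
    intro c
    refine (Complex.norm_le_abs_re_add_abs_im _).trans ?_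
    have h1 := hfloor_err c.re
    have h2 := hfloor_err c.im
    simp only [Complex.sub_re, Complex.sub_im, hr]
    linarith
  -- the candidate-center map
  set φ : (Fin k → Fin n × ℂ) → (Fin n → ℂ) :=
    fun p i => if h : ∃ j, (p j).1 = i then (p h.choose).2 else 0 with hφ
  set Net₀ : Finset (Fin n → ℂ) :=
    (Fintype.piFinset fun _ : Fin k => (univ : Finset (Fin n)) ×ˢ G).image φ with hNet₀
  -- recenter
  set ψ : (Fin n → ℂ) → (Fin n → ℂ) :=
    fun c => if h : ∃ x ∈ l2Ball n, dInfty x c ≤ 2*ε/5 then h.choose else 0 with hψ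
  set s : Finset (Fin n → ℂ) := Net₀.image ψ with hs
  have hsub : ↑s ⊆ l2Ball n := by
    intro y hy
    obtain ⟨c, _, rfl⟩ := Finset.mem_image.mp hy
    by_cases h : ∃ x ∈ l2Ball n, dInfty x c ≤ 2*ε/5
    · simp only [hψ, dif_pos h]; exact h.choose_spec.1
    · simp only [hψ, dif_neg h]; exact zero_mem_l2Ball
  -- the covering property
  have hcover : ∀ z ∈ l2Ball n, ∃ w ∈ s, dInfty z w < ε := by
    intro z hz
    set w : Fin n → ℂ := fun i => if 2*ε/5 < ‖z i‖ then r (z i) else 0 with hw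
    set S : Finset (Fin n) := univ.filter (fun i => 2*ε/5 < ‖z i‖) with hS
    have hScard : S.card ≤ k := by
      have hsum : (S.card : ℝ) * (2*ε/5)^2 ≤ 1 := by
        have h1 : S.card • ((2*ε/5)^2) ≤ ∑ i ∈ S, ‖z i‖^2 := by
          apply Finset.card_nsmul_le_sum
          intro i hi
          have := (Finset.mem_filter.mp hi).2
          nlinarith [norm_nonneg (z i)]
        have h2 : ∑ i ∈ S, ‖z i‖^2 ≤ ∑ i, ‖z i‖^2 :=
          Finset.sum_le_sum_of_subset_of_nonneg (Finset.subset_univ S)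
            (fun i _ _ => by positivity)
        rw [nsmul_eq_mul] at h1
        exact h1.trans (h2.trans hz)
      refine le_min (le_trans (Finset.card_le_univ S) (by simp)) ?_
      have hc : (S.card : ℝ) ≤ 7/ε^2 := by
        rw [le_div_iff₀ (by positivity)]
        nlinarith
      exact_mod_cast hc.trans (Nat.le_ceil _)
    have hzi1 : ∀ i, ‖z i‖ ≤ 1 := norm_le_one_of_mem hz
    have hw_mem : ∀ i, w i ∈ G := by
      intro i
      by_cases h : 2*ε/5 < ‖z i‖
      · have hwi : w i = r (z i) := if_pos h
        rw [hwi]; exact hr_mem _ (hzi1 i)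
      · have hwi : w i = 0 := if_neg h
        rw [hwi]; exact hG0
    -- enumeration of S
    set σ : Fin k → Fin n := fun j => S.toList.getD j ⟨0, hn⟩ with hσ
    have hσS : ∀ i ∈ S, ∃ j : Fin k, σ j = i := by
      intro i hi
      have : i ∈ S.toList := Finset.mem_toList.mpr hi
      obtain ⟨m, hm, hi'⟩ := List.mem_iff_getElem.mp this
      have hmk : m < k := by
        rw [Finset.length_toList] at hm
        exact lt_of_lt_of_le hm hScard
      refine ⟨⟨m, hmk⟩, ?_⟩
      have : σ ⟨m, hmk⟩ = S.toList.getD m ⟨0, hn⟩ := rfl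
      rw [this, List.getD_eq_getElem _ _ hm]
      exact hi'
    set p₀ : Fin k → Fin n × ℂ := fun j => (σ j, w (σ j)) with hp₀
    have hp₀mem : p₀ ∈ Fintype.piFinset fun _ : Fin k => (univ : Finset (Fin n)) ×ˢ G := by
      rw [Fintype.mem_piFinset]
      intro j
      rw [Finset.mem_product]
      exact ⟨Finset.mem_univ _, hw_mem _⟩
    have hφp₀ : φ p₀ = w := by
      funext i
      rw [hφ]
      by_cases h : ∃ j, (p₀ j).1 = i
      · simp only [dif_pos h]
        have hspec : (p₀ h.choose).1 = i := h.choose_spec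
        calc (p₀ h.choose).2 = w (p₀ h.choose).1 := rfl
        _ = w i := by rw [hspec]
      · simp only [dif_neg h]
        have hiS : i ∉ S := by
          intro hiS
          obtain ⟨j, hj⟩ := hσS i hiS
          exact h ⟨j, hj⟩
        have hni : ¬ (2*ε/5 < ‖z i‖) := by simpa [hS] using hiS
        exact (if_neg hni).symm
    have hwNet : w ∈ Net₀ := by
      rw [hNet₀]
      exact Finset.mem_image.mpr ⟨p₀, hp₀mem, hφp₀⟩
    have hdzw : dInfty z w ≤ 2*ε/5 := by
      apply dInfty_le
      intro i
      by_cases h : 2*ε/5 < ‖z i‖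
      · have hwi : w i = r (z i) := if_pos h
        rw [hwi]
        calc ‖z i - r (z i)‖ ≤ 2*δ := hr_err _
        _ = 2*ε/5 := by rw [hδ]; ring
      · have hwi : w i = 0 := if_neg h
        rw [hwi]
        simpa using not_lt.mp h
    have hex : ∃ x ∈ l2Ball n, dInfty x w ≤ 2*ε/5 := ⟨z, hz, hdzw⟩
    refine ⟨ψ w, Finset.mem_image_of_mem ψ hwNet, ?_⟩
    have hψw : ψ w = hex.choose := by rw [hψ]; simp only [dif_pos hex]
    obtain ⟨hxball, hxw⟩ := hex.choose_spec
    rw [hψw]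
    have htri : dInfty z hex.choose ≤ dInfty z w + dInfty hex.choose w := by
      apply dInfty_le
      intro i
      calc ‖z i - hex.choose i‖ ≤ ‖z i - w i‖ + ‖w i - hex.choose i‖ := by
            have := norm_sub_le_norm_sub_add_norm_sub (z i) (w i) (hex.choose i)
            linarith [norm_sub_le (z i - w i) (hex.choose i - w i)]
      _ ≤ dInfty z w + dInfty hex.choose w := by
            rw [norm_sub_rev (w i)]
            exact add_le_add (le_dInfty z w i) (le_dInfty hex.choose w i)
    calc dInfty z hex.choose ≤ dInfty z w + dInfty hex.choose w := htri
    _ ≤ 2*ε/5 + 2*ε/5 := add_le_add hdzw hxw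
    _ < ε := by linarith
  -- conclude
  have hmem : s.card ∈ {m : ℕ | ∃ t : Finset (Fin n → ℂ), ↑t ⊆ l2Ball n ∧ t.card = m ∧
      ∀ z ∈ l2Ball n, ∃ w ∈ t, dInfty z w < ε} := ⟨s, hsub, rfl, hcover⟩
  refine (Nat.sInf_le hmem).trans ?_
  calc s.card ≤ Net₀.card := Finset.card_image_le
  _ ≤ (Fintype.piFinset fun _ : Fin k => (univ : Finset (Fin n)) ×ˢ G).card :=
      Finset.card_image_le
  _ = ∏ _j : Fin k, ((univ : Finset (Fin n)) ×ˢ G).card := by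
      rw [Fintype.card_piFinset]
  _ = (n * G.card) ^ k := by
      rw [Finset.prod_const, Finset.card_product, Finset.card_univ, Fintype.card_fin,
        Finset.card_univ, Fintype.card_fin]
  _ ≤ (n * (2*M+1)^2) ^ k := Nat.pow_le_pow_left (Nat.mul_le_mul_left n hGcard) k

lemma dInfty_pair_le [Nonempty (Fin n)] {z z' : Fin n → ℂ}
    (hz : z ∈ l2Ball n) (hz' : z' ∈ l2Ball n) : dInfty z z' ≤ 2 := by
  apply dInfty_le
  intro i
  calc ‖z i - z' i‖ ≤ ‖z i‖ + ‖z' i‖ := norm_sub_le _ _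
  _ ≤ 2 := by have := norm_le_one_of_mem hz i; have := norm_le_one_of_mem hz' i; linarith

lemma diamInfty_eq_two (hn : 1 ≤ n) : diamInfty n = 2 := by
  haveI : Nonempty (Fin n) := Fin.pos_iff_nonempty.mp hn
  classical
  set e : Fin n → ℂ := fun i => if i = ⟨0, hn⟩ then 1 else 0 with he
  have heB : e ∈ l2Ball n := by
    simp only [l2Ball, Set.mem_setOf_eq, he]
    rw [Finset.sum_congr rfl (g := fun i => if i = (⟨0, hn⟩ : Fin n) then 1 else 0)]
    · simp
    · intro i _
      by_cases h : i = ⟨0, hn⟩ <;> simp [h]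
  have hneB : (-e) ∈ l2Ball n := by
    simpa only [l2Ball, Set.mem_setOf_eq, Pi.neg_apply, norm_neg] using heB
  have hd : dInfty e (-e) = 2 := by
    apply le_antisymm (dInfty_pair_le heB hneB)
    have := le_dInfty e (-e) ⟨0, hn⟩
    norm_num [he] at this; exact this
  have hbdd : BddAbove {r : ℝ | ∃ z ∈ l2Ball n, ∃ z' ∈ l2Ball n, r = dInfty z z'} := by
    refine ⟨2, ?_⟩
    rintro r ⟨z, hz, z', hz', rfl⟩
    exact dInfty_pair_le hz hz'
  apply le_antisymm
  · exact csSup_le ⟨dInfty e (-e), e, heB, -e, hneB, rfl⟩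
      (by rintro r ⟨z, hz, z', hz', rfl⟩; exact dInfty_pair_le hz hz')
  · rw [← hd]; exact le_csSup hbdd ⟨e, heB, -e, hneB, rfl⟩

lemma sqrt_add_le' {x y : ℝ} (hx : 0 ≤ x) (hy : 0 ≤ y) :
    Real.sqrt (x + y) ≤ Real.sqrt x + Real.sqrt y := by
  rw [← Real.sqrt_sq (by positivity : (0:ℝ) ≤ Real.sqrt x + Real.sqrt y)]
  apply Real.sqrt_le_sqrt
  nlinarith [Real.sq_sqrt hx, Real.sq_sqrt hy, Real.sqrt_nonneg x, Real.sqrt_nonneg y]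


lemma g_le (hn : 2 ≤ n) {ε : ℝ} (hε : 0 < ε) :
    Real.sqrt (Real.log ((covNum n ε : ℝ) + 1)) ≤
      Real.sqrt (min n ⌈7/ε^2⌉₊ : ℕ) *
        Real.sqrt (Real.log n + 2 * Real.log (2*(⌈5/ε⌉₊:ℝ)+1)) + 1 := by
  have hn1 : (1:ℝ) ≤ n := by exact_mod_cast hn.trans' (by norm_num)
  set M : ℕ := ⌈5/ε⌉₊ with hM
  set k : ℕ := min n ⌈7/ε^2⌉₊ with hk
  set B : ℝ := (n:ℝ) * (2*(M:ℝ)+1)^2 with hB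
  have hM1 : (1:ℝ) ≤ 2*(M:ℝ)+1 := by have : (0:ℝ) ≤ (M:ℝ) := Nat.cast_nonneg M; linarith
  have hB1 : (1:ℝ) ≤ B := by nlinarith
  have hcov : (covNum n ε : ℝ) ≤ B ^ k := by
    have := covNum_le (le_trans (by norm_num) hn) hε
    calc (covNum n ε : ℝ) ≤ ((n * (2 * M + 1) ^ 2) ^ k : ℕ) := by exact_mod_cast this
    _ = B ^ k := by push_cast [hB]; ring
  have hlog : Real.log ((covNum n ε : ℝ) + 1) ≤ (k:ℝ) * Real.log B + 1 := by
    have h1 : (covNum n ε : ℝ) + 1 ≤ 2 * B ^ k := by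
      have : (1:ℝ) ≤ B ^ k := one_le_pow₀ hB1
      linarith
    calc Real.log ((covNum n ε : ℝ) + 1) ≤ Real.log (2 * B ^ k) :=
          Real.log_le_log (by positivity) h1
    _ = Real.log 2 + (k:ℝ) * Real.log B := by
          rw [Real.log_mul (by norm_num) (by positivity), Real.log_pow]
    _ ≤ (k:ℝ) * Real.log B + 1 := by
          have := Real.log_le_sub_one_of_pos (by norm_num : (0:ℝ) < 2)
          linarith
  have hlogB : Real.log B = Real.log n + 2 * Real.log (2*(M:ℝ)+1) := by
    rw [hB, Real.log_mul (by positivity) (by positivity), Real.log_pow]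
    push_cast; ring
  have hQ0 : 0 ≤ Real.log n + 2 * Real.log (2*(M:ℝ)+1) := by
    have := Real.log_nonneg hn1
    have := Real.log_nonneg hM1
    linarith
  calc Real.sqrt (Real.log ((covNum n ε : ℝ) + 1))
      ≤ Real.sqrt ((k:ℝ) * Real.log B + 1) := Real.sqrt_le_sqrt hlog
  _ ≤ Real.sqrt ((k:ℝ) * Real.log B) + Real.sqrt 1 := by
        apply sqrt_add_le' _ (by norm_num)
        rw [hlogB]; positivity
  _ = Real.sqrt (k:ℕ) * Real.sqrt (Real.log n + 2 * Real.log (2*(M:ℝ)+1)) + 1 := by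
        rw [Real.sqrt_one, Real.sqrt_mul (by positivity), hlogB]

lemma two_M_bound {ε c : ℝ} (hε : 0 < ε) (hc : 3 * ε ≤ c - 10) :
    2*(⌈5/ε⌉₊:ℝ)+1 ≤ c/ε := by
  have h1 : (⌈5/ε⌉₊:ℝ) < 5/ε + 1 := Nat.ceil_lt_add_one (by positivity)
  rw [le_div_iff₀ hε]
  have h2 : (5/ε) * ε = 5 := div_mul_cancel₀ 5 hε.ne'
  nlinarith

lemma log_le_two_sqrt {x : ℝ} (hx : 0 < x) : Real.log x ≤ 2 * Real.sqrt x := by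
  have h1 : Real.log (Real.sqrt x) = Real.log x / 2 := Real.log_sqrt hx.le
  have h2 : Real.log (Real.sqrt x) ≤ Real.sqrt x - 1 :=
    Real.log_le_sub_one_of_pos (Real.sqrt_pos.mpr hx)
  linarith

-- region (0, 1/√n]
lemma bound_low (hn : 2 ≤ n) {ε : ℝ} (hε : 0 < ε) (hεa : ε ≤ (Real.sqrt n)⁻¹) :
    Real.sqrt (Real.log ((covNum n ε : ℝ) + 1)) ≤
      (Real.sqrt n * (Real.sqrt 2 * Real.sqrt (Real.log n) + 5) + 1) +
        (2 * Real.sqrt n * ((Real.sqrt n)⁻¹) ^ ((1:ℝ)/4)) * ε ^ (-(1:ℝ)/4) := by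
  have hn1 : (1:ℝ) ≤ n := by exact_mod_cast hn.trans' (by norm_num)
  set a : ℝ := (Real.sqrt n)⁻¹ with ha
  have hsn1 : 1 ≤ Real.sqrt n := by
    rw [show (1:ℝ) = Real.sqrt 1 by rw [Real.sqrt_one]]
    exact Real.sqrt_le_sqrt hn1
  have hapos : 0 < a := by rw [ha]; positivity
  have ha1 : a ≤ 1 := by rw [ha]; exact inv_le_one_of_one_le₀ hsn1
  have hε1 : ε ≤ 1 := hεa.trans ha1
  set L : ℝ := Real.log n with hL
  have hL0 : 0 ≤ L := Real.log_nonneg hn1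
  have hloga : Real.log a = -(L/2) := by
    rw [ha, Real.log_inv, Real.log_sqrt (by positivity)]
  -- main quantity
  set Q : ℝ := L + 2 * Real.log (2*(⌈5/ε⌉₊:ℝ)+1) with hQ
  have hQle : Q ≤ 2*L + 24 + 4 * Real.sqrt (a/ε) := by
    have h13 : 2*(⌈5/ε⌉₊:ℝ)+1 ≤ 13/ε := two_M_bound hε (by linarith)
    have hlog13 : Real.log (2*(⌈5/ε⌉₊:ℝ)+1) ≤ Real.log 13 - Real.log ε := by
      rw [← Real.log_div (by norm_num) hε.ne']
      exact Real.log_le_log (by positivity) h13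
    have hlogsplit : -Real.log ε = L/2 + Real.log (a/ε) := by
      rw [Real.log_div hapos.ne' hε.ne', hloga]; ring
    have hlogae : Real.log (a/ε) ≤ 2 * Real.sqrt (a/ε) := log_le_two_sqrt (by positivity)
    have hlog13' : Real.log 13 ≤ 12 := by
      have := Real.log_le_sub_one_of_pos (by norm_num : (0:ℝ) < 13); linarith
    rw [hQ]
    nlinarith
  have hQ0 : 0 ≤ Real.log n + 2 * Real.log (2*(⌈5/ε⌉₊:ℝ)+1) := by
    have h1' : (1:ℝ) ≤ 2*(⌈5/ε⌉₊:ℝ)+1 := by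
      have : (0:ℝ) ≤ (⌈5/ε⌉₊:ℝ) := Nat.cast_nonneg _
      linarith
    have := Real.log_nonneg h1'
    linarith
  have hsqQ : Real.sqrt Q ≤ Real.sqrt 2 * Real.sqrt L + 5 + 2 * a ^ ((1:ℝ)/4) * ε ^ (-(1:ℝ)/4) := by
    have h1 : Real.sqrt Q ≤ Real.sqrt (2*L + 24) + Real.sqrt (4 * Real.sqrt (a/ε)) := by
      refine (Real.sqrt_le_sqrt hQle).trans ?_
      exact sqrt_add_le' (by linarith) (by positivity)
    have h2 : Real.sqrt (2*L + 24) ≤ Real.sqrt 2 * Real.sqrt L + 5 := by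
      refine (sqrt_add_le' (by linarith) (by norm_num)).trans ?_
      rw [Real.sqrt_mul (by norm_num)]
      have : Real.sqrt 24 ≤ 5 := by
        rw [show (5:ℝ) = Real.sqrt 25 by rw [show (25:ℝ) = 5^2 by norm_num, Real.sqrt_sq]; norm_num]
        exact Real.sqrt_le_sqrt (by norm_num)
      linarith
    have h3 : Real.sqrt (4 * Real.sqrt (a/ε)) = 2 * Real.sqrt (Real.sqrt (a/ε)) := by
      rw [Real.sqrt_mul (by norm_num), show (4:ℝ) = 2^2 by norm_num, Real.sqrt_sq (by norm_num)]
    have h4 : Real.sqrt (Real.sqrt (a/ε)) = a ^ ((1:ℝ)/4) * ε ^ (-(1:ℝ)/4) := by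
      have hae : (0:ℝ) ≤ a/ε := by positivity
      rw [Real.sqrt_eq_rpow, Real.sqrt_eq_rpow, ← Real.rpow_mul hae]
      rw [show (1:ℝ)/2 * (1/2) = 1/4 by norm_num]
      rw [Real.div_rpow hapos.le hε.le, div_eq_mul_inv, ← Real.rpow_neg hε.le]
      norm_num
    calc Real.sqrt Q ≤ Real.sqrt (2*L+24) + Real.sqrt (4*Real.sqrt (a/ε)) := h1
    _ = Real.sqrt (2*L+24) + 2 * Real.sqrt (Real.sqrt (a/ε)) := by rw [h3]
    _ ≤ Real.sqrt 2 * Real.sqrt L + 5 + 2 * (a ^ ((1:ℝ)/4) * ε ^ (-(1:ℝ)/4)) := by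
        rw [← h4]; linarith
    _ = Real.sqrt 2 * Real.sqrt L + 5 + 2 * a ^ ((1:ℝ)/4) * ε ^ (-(1:ℝ)/4) := by ring
  have hk : Real.sqrt (min n ⌈7/ε^2⌉₊ : ℕ) ≤ Real.sqrt n := by
    apply Real.sqrt_le_sqrt
    exact_mod_cast min_le_left _ _
  calc Real.sqrt (Real.log ((covNum n ε : ℝ) + 1))
      ≤ Real.sqrt (min n ⌈7/ε^2⌉₊ : ℕ) * Real.sqrt Q + 1 := g_le hn hε
  _ ≤ Real.sqrt n * (Real.sqrt 2 * Real.sqrt L + 5 + 2 * a ^ ((1:ℝ)/4) * ε ^ (-(1:ℝ)/4)) + 1 := by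
      have := mul_le_mul hk hsqQ (Real.sqrt_nonneg _) (Real.sqrt_nonneg _)
      linarith
  _ = (Real.sqrt n * (Real.sqrt 2 * Real.sqrt L + 5) + 1) +
        (2 * Real.sqrt n * a ^ ((1:ℝ)/4)) * ε ^ (-(1:ℝ)/4) := by ring

-- region [1/√n, 2]
lemma bound_high (hn : 2 ≤ n) {ε : ℝ} (hεa : (Real.sqrt n)⁻¹ ≤ ε) (hε2 : ε ≤ 2) :
    Real.sqrt (Real.log ((covNum n ε : ℝ) + 1)) ≤
      (6 * Real.sqrt (Real.log n) + 24) * ε⁻¹ + 1 := by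
  have hn1 : (1:ℝ) ≤ n := by exact_mod_cast hn.trans' (by norm_num)
  have hsn1 : 1 ≤ Real.sqrt n := by
    rw [show (1:ℝ) = Real.sqrt 1 by rw [Real.sqrt_one]]
    exact Real.sqrt_le_sqrt hn1
  set a : ℝ := (Real.sqrt n)⁻¹ with ha
  have hapos : 0 < a := by rw [ha]; positivity
  have hε : 0 < ε := lt_of_lt_of_le hapos hεa
  set L : ℝ := Real.log n with hL
  have hL0 : 0 ≤ L := Real.log_nonneg hn1
  have hloga : Real.log a = -(L/2) := by
    rw [ha, Real.log_inv, Real.log_sqrt (by positivity)]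
  have hk : Real.sqrt (min n ⌈7/ε^2⌉₊ : ℕ) ≤ 4 * ε⁻¹ := by
    have h1 : ((min n ⌈7/ε^2⌉₊ : ℕ):ℝ) ≤ 16/ε^2 := by
      have h2 : ((⌈7/ε^2⌉₊:ℕ):ℝ) < 7/ε^2 + 1 := Nat.ceil_lt_add_one (by positivity)
      have h3 : ((min n ⌈7/ε^2⌉₊ : ℕ):ℝ) ≤ ((⌈7/ε^2⌉₊:ℕ):ℝ) := by
        exact_mod_cast min_le_right _ _
      have h4 : (1:ℝ) ≤ 4/ε^2 := by
        rw [le_div_iff₀ (by positivity)]; nlinarith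
      have h5 : 7/ε^2 + 4/ε^2 ≤ 16/ε^2 := by
        rw [← add_div, div_le_div_iff_of_pos_right (by positivity)]; norm_num
      linarith
    refine (Real.sqrt_le_sqrt h1).trans ?_
    rw [show (16:ℝ)/ε^2 = (4*ε⁻¹)^2 by field_simp; ring, Real.sqrt_sq (by positivity)]
  have hQle : Real.log n + 2 * Real.log (2*(⌈5/ε⌉₊:ℝ)+1) ≤ 2*L + 30 := by
    have h16 : 2*(⌈5/ε⌉₊:ℝ)+1 ≤ 16/ε := two_M_bound hε (by linarith)
    have h16a : (16:ℝ)/ε ≤ 16/a := by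
      apply div_le_div_of_nonneg_left (by norm_num) hapos hεa
    have hlog : Real.log (2*(⌈5/ε⌉₊:ℝ)+1) ≤ Real.log (16/a) :=
      Real.log_le_log (by positivity) (h16.trans h16a)
    have hlog16a : Real.log (16/a) = Real.log 16 - Real.log a := Real.log_div (by norm_num) hapos.ne'
    have h16' : Real.log 16 ≤ 15 := by
      have := Real.log_le_sub_one_of_pos (by norm_num : (0:ℝ) < 16); linarith
    rw [hlog16a, hloga] at hlog
    nlinarith
  have hsqQ : Real.sqrt (Real.log n + 2 * Real.log (2*(⌈5/ε⌉₊:ℝ)+1)) ≤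
      1.5 * Real.sqrt L + 6 := by
    refine (Real.sqrt_le_sqrt hQle).trans ?_
    refine (sqrt_add_le' (by linarith) (by norm_num)).trans ?_
    rw [Real.sqrt_mul (by norm_num)]
    have h2 : Real.sqrt 2 ≤ 1.5 := by
      rw [show (1.5:ℝ) = Real.sqrt (1.5^2) by rw [Real.sqrt_sq]; norm_num]
      exact Real.sqrt_le_sqrt (by norm_num)
    have h30 : Real.sqrt 30 ≤ 6 := by
      rw [show (6:ℝ) = Real.sqrt (6^2) by rw [Real.sqrt_sq]; norm_num]
      exact Real.sqrt_le_sqrt (by norm_num)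
    have := Real.sqrt_nonneg L
    nlinarith
  calc Real.sqrt (Real.log ((covNum n ε : ℝ) + 1))
      ≤ Real.sqrt (min n ⌈7/ε^2⌉₊ : ℕ) *
        Real.sqrt (Real.log n + 2 * Real.log (2*(⌈5/ε⌉₊:ℝ)+1)) + 1 := g_le hn hε
  _ ≤ (4 * ε⁻¹) * (1.5 * Real.sqrt L + 6) + 1 := by
      have := mul_le_mul hk hsqQ (Real.sqrt_nonneg _) (by positivity : (0:ℝ) ≤ 4 * ε⁻¹)
      linarith
  _ = (6 * Real.sqrt L + 24) * ε⁻¹ + 1 := by ring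

lemma covNum_zero (hn : 1 ≤ n) : covNum n 0 = 0 := by
  rw [covNum]
  convert Nat.sInf_empty using 2
  rw [Set.eq_empty_iff_forall_notMem]
  rintro m ⟨s, hs, hc, hcov⟩
  obtain ⟨w, hw, hlt⟩ := hcov 0 zero_mem_l2Ball
  have h1 := le_dInfty 0 w ⟨0, hn⟩
  have h2 : (0:ℝ) ≤ dInfty 0 w := le_trans (norm_nonneg _) h1
  linarith


end EntropyAux

set_option maxHeartbeats 1000000 in
/-- Entropy integral estimate: for the Young function `ψ₂(t) = e^{t²} − 1` (so that
`ψ₂⁻¹(t) = √(log(t+1))`), the unit ball of `ℓ₂ⁿ` with the `ℓ∞` metric satisfies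
`J_{ψ₂}(B_{ℓ₂ⁿ}, ‖·‖_∞) = ∫₀^{diam} ψ₂⁻¹(N(B_{ℓ₂ⁿ},‖·‖_∞;ε)) dε ≤ C log^{3/2} n`
for some constant `C > 0` independent of `n ≥ 2`. -/
theorem entropy_integral_bound :
    ∃ C > 0, ∀ n : ℕ, 2 ≤ n →
      (∫ ε in (0 : ℝ)..diamInfty n, Real.sqrt (Real.log ((covNum n ε : ℝ) + 1))) ≤
        C * Real.log n ^ ((3 : ℝ) / 2) := by
  refine ⟨200, by norm_num, ?_⟩
  intro n hn
  have hn1 : 1 ≤ n := le_trans (by norm_num) hn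
  have hn1R : (1:ℝ) ≤ n := by exact_mod_cast hn1
  have hd : diamInfty n = 2 := diamInfty_eq_two hn1
  rw [hd]
  set g : ℝ → ℝ := fun ε => Real.sqrt (Real.log ((covNum n ε : ℝ) + 1)) with hg
  set L : ℝ := Real.log n with hL
  have hLlog2 : Real.log 2 ≤ L := Real.log_le_log (by norm_num) (by exact_mod_cast hn)
  have hL069 : (0.69:ℝ) ≤ L := le_trans (by linarith [Real.log_two_gt_d9]) hLlog2
  have hLpos : 0 < L := by linarith
  have hs08 : (0.8:ℝ) ≤ Real.sqrt L := by
    rw [show (0.8:ℝ) = Real.sqrt (0.8^2) by rw [Real.sqrt_sq]; norm_num]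
    exact Real.sqrt_le_sqrt (by norm_num; linarith)
  have hsq : Real.sqrt L ^ 2 = L := Real.sq_sqrt hLpos.le
  have hrpow : L ^ ((3:ℝ)/2) = L * Real.sqrt L := by
    rw [show (3:ℝ)/2 = 1 + 1/2 by norm_num, Real.rpow_add hLpos, Real.rpow_one,
      Real.sqrt_eq_rpow]
  by_cases hInt : IntervalIntegrable g volume 0 2
  swap
  · rw [intervalIntegral.integral_undef hInt, hrpow]
    nlinarith [Real.sqrt_nonneg L]
  · set a : ℝ := (Real.sqrt n)⁻¹ with ha
    have hsn1 : 1 ≤ Real.sqrt n := by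
      rw [show (1:ℝ) = Real.sqrt 1 by rw [Real.sqrt_one]]
      exact Real.sqrt_le_sqrt hn1R
    have hapos : 0 < a := by rw [ha]; positivity
    have ha1 : a ≤ 1 := by rw [ha]; exact inv_le_one_of_one_le₀ hsn1
    have ha2 : a ≤ 2 := by linarith
    have hloga : Real.log a = -(L/2) := by
      rw [ha, Real.log_inv, Real.log_sqrt (by positivity), hL]
    have hsub1 : IntervalIntegrable g volume 0 a := by
      apply hInt.mono_set
      rw [Set.uIcc_of_le hapos.le, Set.uIcc_of_le (by norm_num : (0:ℝ) ≤ 2)]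
      exact Set.Icc_subset_Icc le_rfl ha2
    have hsub2 : IntervalIntegrable g volume a 2 := by
      apply hInt.mono_set
      rw [Set.uIcc_of_le ha2, Set.uIcc_of_le (by norm_num : (0:ℝ) ≤ 2)]
      exact Set.Icc_subset_Icc hapos.le le_rfl
    rw [← intervalIntegral.integral_add_adjacent_intervals hsub1 hsub2]
    -- piece 1
    set A₁ : ℝ := Real.sqrt n * (Real.sqrt 2 * Real.sqrt L + 5) + 1 with hA₁
    set B₁ : ℝ := 2 * Real.sqrt n * a ^ ((1:ℝ)/4) with hB₁
    set h₁ : ℝ → ℝ := fun ε => A₁ + B₁ * ε ^ (-(1:ℝ)/4) with hh₁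
    have hh₁int : IntervalIntegrable h₁ volume 0 a := by
      apply IntervalIntegrable.add intervalIntegrable_const
      exact (intervalIntegral.intervalIntegrable_rpow' (by norm_num)).const_mul _
    have hA₁0 : 0 ≤ A₁ := by
      rw [hA₁]
      have := Real.sqrt_nonneg (n:ℝ); have := Real.sqrt_nonneg (2:ℝ)
      have := Real.sqrt_nonneg L
      positivity
    have hp1 : (∫ ε in (0:ℝ)..a, g ε) ≤ ∫ ε in (0:ℝ)..a, h₁ ε := by
      apply intervalIntegral.integral_mono_on hapos.le hsub1 hh₁int
      intro x hx
      rcases eq_or_lt_of_le hx.1 with h0 | h0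
      · rw [hg, hh₁]
        simp only [← h0]
        rw [covNum_zero hn1]
        have h0r : (0:ℝ) ^ (-(1:ℝ)/4) = 0 := Real.zero_rpow (by norm_num)
        rw [h0r]
        simpa using hA₁0
      · exact bound_low hn h0 hx.2
    have hint1 : (∫ ε in (0:ℝ)..a, h₁ ε) = A₁ * a + B₁ * ((4:ℝ)/3 * a ^ ((3:ℝ)/4)) := by
      rw [hh₁]
      rw [intervalIntegral.integral_add intervalIntegrable_const
        ((intervalIntegral.intervalIntegrable_rpow' (by norm_num)).const_mul _)]
      rw [intervalIntegral.integral_const, intervalIntegral.integral_const_mul,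
        integral_rpow (Or.inl (by norm_num : (-1:ℝ) < -1/4))]
      rw [Real.zero_rpow (by norm_num)]
      norm_num
      ring
    have hB₁a : B₁ * a ^ ((3:ℝ)/4) = 2 := by
      rw [hB₁, mul_assoc, ← Real.rpow_add hapos]
      norm_num
      rw [mul_assoc, mul_inv_cancel₀ (by positivity : Real.sqrt (n:ℝ) ≠ 0), mul_one]
    have hsna : Real.sqrt n * a = 1 := by rw [ha, mul_inv_cancel₀ (by positivity)]
    have hpiece1 : (∫ ε in (0:ℝ)..a, g ε) ≤ Real.sqrt 2 * Real.sqrt L + 6 + 8/3 := by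
      refine hp1.trans ?_
      rw [hint1]
      have h1 : A₁ * a = (Real.sqrt 2 * Real.sqrt L + 5) + a := by
        rw [hA₁]; nlinarith [hsna]
      have h2 : B₁ * ((4:ℝ)/3 * a ^ ((3:ℝ)/4)) = 8/3 := by
        rw [show B₁ * ((4:ℝ)/3 * a ^ ((3:ℝ)/4)) = (4:ℝ)/3 * (B₁ * a ^ ((3:ℝ)/4)) by ring,
          hB₁a]
        norm_num
      rw [h1, h2]
      linarith
    -- piece 2
    set D : ℝ := 6 * Real.sqrt L + 24 with hD
    set h₂ : ℝ → ℝ := fun ε => D * ε⁻¹ + 1 with hh₂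
    have hIccne : ∀ x ∈ Set.uIcc a 2, x ≠ 0 := by
      rw [Set.uIcc_of_le ha2]
      intro x hx
      have := hx.1
      intro h0
      rw [h0] at this
      linarith
    have hcont : ContinuousOn h₂ (Set.uIcc a 2) := by
      apply ContinuousOn.add _ continuousOn_const
      exact continuousOn_const.mul (continuousOn_id.inv₀ hIccne)
    have hh₂int : IntervalIntegrable h₂ volume a 2 := hcont.intervalIntegrable
    have hp2 : (∫ ε in a..2, g ε) ≤ ∫ ε in a..2, h₂ ε := by
      apply intervalIntegral.integral_mono_on ha2 hsub2 hh₂int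
      intro x hx
      exact bound_high hn hx.1 hx.2
    have hintinv : IntervalIntegrable (fun ε : ℝ => D * ε⁻¹) volume a 2 := by
      apply ContinuousOn.intervalIntegrable
      exact continuousOn_const.mul (continuousOn_id.inv₀ hIccne)
    have hint2 : (∫ ε in a..2, h₂ ε) = D * Real.log (2/a) + (2 - a) := by
      rw [hh₂, intervalIntegral.integral_add hintinv intervalIntegrable_const,
        intervalIntegral.integral_const_mul, integral_inv (by
          rw [Set.uIcc_of_le ha2]
          intro hmem
          exact absurd hmem.1 (by linarith)),
        intervalIntegral.integral_const]
      norm_num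
    have hlog2a : Real.log (2/a) = Real.log 2 + L/2 := by
      rw [Real.log_div (by norm_num) hapos.ne', hloga]; ring
    have hpiece2 : (∫ ε in a..2, g ε) ≤ D * (1 + L/2) + 2 := by
      refine hp2.trans ?_
      rw [hint2, hlog2a]
      have hlog2le : Real.log 2 ≤ 1 := by
        have := Real.log_le_sub_one_of_pos (by norm_num : (0:ℝ) < 2); linarith
      have hD0 : 0 ≤ D := by rw [hD]; positivity
      nlinarith
    -- total
    have htot : (∫ ε in (0:ℝ)..a, g ε) + (∫ ε in a..2, g ε) ≤ 200 * (L * Real.sqrt L) := by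
      have hsqrt2 : Real.sqrt 2 ≤ 1.5 := by
        rw [show (1.5:ℝ) = Real.sqrt (1.5^2) by rw [Real.sqrt_sq]; norm_num]
        exact Real.sqrt_le_sqrt (by norm_num)
      set s : ℝ := Real.sqrt L with hss
      have hs0 : 0 ≤ s := Real.sqrt_nonneg L
      have hexp : D * (1 + L/2) + 2 = 6*s + 3*s*L + 26 + 12*L := by rw [hD]; ring
      have hLs : L = s^2 := hsq.symm
      nlinarith [hpiece1, hpiece2, hs08, hsq, mul_le_mul_of_nonneg_right hsqrt2 hs0]
    rw [hrpow]
    linarith
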